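/- arXiv:1210.2700 — 3 statements merged into one kernel-verified Lean document; each statement's English description precedes it below -/
import Mathlib

section
/- Let α : k → k be a field endomorphism. Then there exists a field extension β : k → K and a field endomorphism α̂ : K → K such that α̂ ∘ β = β ∘ α and α̂ is an isomorphism (i.e., bijective). -/
open Ring

section Aux

variable {k : Type u} [Field k] (α : k →+* k)

/-- The directed system `k →α k →α k → ⋯` indexed by `ℕ`. -/
noncomputable def endoSystem : ∀ i j : ℕ, i ≤ j → k →+* k := fun i j _ => α ^ (j - i)

theorem endoSystem_directed : DirectedSystem (fun _ : ℕ => k)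
    (fun i j h => (endoSystem α i j h : k → k)) := by
  constructor
  · intro i x
    simp [endoSystem]
  · intro l j i hij hjl x
    simp only [endoSystem]
    have : α ^ (l - j) * α ^ (j - i) = α ^ (l - i) := by
      rw [← pow_add]
      congr 1
      omega
    calc (α ^ (l - j)) ((α ^ (j - i)) x) = ((α ^ (l - j)) * (α ^ (j - i))) x := rfl
      _ = (α ^ (l - i)) x := by rw [this]

theorem pow_comm_apply (n : ℕ) (x : k) : (α ^ n) (α x) = α ((α ^ n) x) := by
  have : α ^ n * α = α * α ^ n := by
    rw [← pow_succ, ← pow_succ']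
  calc (α ^ n) (α x) = (α ^ n * α) x := rfl
    _ = (α * α ^ n) x := by rw [this]
    _ = α ((α ^ n) x) := rfl

end Aux

set_option maxHeartbeats 1000000 in
/-- For any field endomorphism `α : k → k` there exist a field extension
`β : k → K` and a field endomorphism `α̂ : K → K` with `α̂ ∘ β = β ∘ α` and `α̂` bijective. -/
theorem exists_extension_with_bijective_endomorphism
    {k : Type u} [Field k] (α : k →+* k) :
    ∃ (K : Type u) (_ : Field K) (β : k →+* K) (αhat : K →+* K),
      αhat.comp β = β.comp α ∧ Function.Bijective αhat := by
  haveI := endoSystem_directed α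
  let K := Ring.DirectLimit (fun _ : ℕ => k) (fun i j h => (endoSystem α i j h : k → k))
  letI : Field K := Field.DirectLimit.field _ (endoSystem α)
  let of' : ∀ i : ℕ, k →+* K := fun i =>
    Ring.DirectLimit.of (fun _ : ℕ => k) (fun i j h => (endoSystem α i j h : k → k)) i
  have hof : ∀ (i j : ℕ) (hij : i ≤ j) (x : k), of' j (endoSystem α i j hij x) = of' i x :=
    fun i j hij x => Ring.DirectLimit.of_f (f := fun i j h => (endoSystem α i j h : k → k)) hij x
  have hstep : ∀ (i : ℕ) (x : k), of' (i + 1) (α x) = of' i x := by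
    intro i x
    have := hof i (i + 1) (Nat.le_succ i) x
    simpa [endoSystem] using this
  let αhat : K →+* K := Ring.DirectLimit.lift _ _ _ (fun i => (of' i).comp α)
    (by
      intro i j hij x
      simp only [RingHom.comp_apply, endoSystem]
      rw [← pow_comm_apply α (j - i) x]
      exact hof i j hij (α x))
  have hαhat : ∀ (i : ℕ) (x : k), αhat (of' i x) = of' i (α x) := fun i x =>
    Ring.DirectLimit.lift_of _ _ _ _ _
  refine ⟨K, inferInstance, of' 0, αhat, ?_, ?_, ?_⟩
  · ext x
    simp [hαhat 0 x]
  · exact αhat.injective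
  · intro z
    obtain ⟨i, x, rfl⟩ := Ring.DirectLimit.exists_of z
    exact ⟨of' (i + 1) x, by rw [hαhat, hstep]⟩
end

section
/- Let φ : (R, m, k) → (R, m, k) be a contracting endomorphism such that R/φ(m)R is Artinian, let β̃ : R → (S, mS, K) be a local homomorphism with maximal ideal mS, and let ψ : S → S be a local endomorphism with ψ ∘ β̃ = β̃ ∘ φ, inducing an isomorphism on the residue field K, with S complete. Then ψ is module-finite, i.e., S is a finitely generated module over itself via restriction of scalars along ψ. -/
open IsLocalRing Submodule

section Nakayama

variable {A M : Type*} [CommRing A] [AddCommGroup M] [Module A M]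

/-- Complete Nakayama: if `A` is `I`-precomplete, `M` is `I`-adically separated, and a finite
family spans `M` modulo `I • M`, then it spans `M`. -/
lemma nakayama_complete (I : Ideal A) (hA : IsPrecomplete I A)
    (hhaus : ∀ z : M, (∀ m : ℕ, z ∈ (I ^ m • ⊤ : Submodule A M)) → z = 0)
    {k : ℕ} (x : Fin k → M)
    (hsup : Submodule.span A (Set.range x) ⊔ I • (⊤ : Submodule A M) = ⊤) :
    Submodule.span A (Set.range x) = ⊤ := by
  set N := Submodule.span A (Set.range x) with hN
  have idtop : ∀ m : ℕ, (I ^ m • ⊤ : Submodule A A) = I ^ m := by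
    intro m
    rw [smul_eq_mul, Ideal.mul_top]
  have key : ∀ m : ℕ, (I ^ m • ⊤ : Submodule A M) ≤ I ^ m • N ⊔ I ^ (m + 1) • ⊤ := by
    intro m
    have h1 : (I ^ m • ⊤ : Submodule A M) = I ^ m • (N ⊔ I • ⊤) := by rw [hsup]
    rw [h1, Submodule.smul_sup]
    refine sup_le_sup le_rfl ?_
    rw [pow_succ, mul_smul]
  have rep : ∀ (m : ℕ) (z : M), ∃ (c : Fin k → A) (e : M),
      z ∈ (I ^ m • ⊤ : Submodule A M) →
      (∀ i, c i ∈ I ^ m) ∧ e ∈ (I ^ (m + 1) • ⊤ : Submodule A M) ∧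
        z = (∑ i, c i • x i) + e := by
    intro m z
    by_cases hz : z ∈ (I ^ m • ⊤ : Submodule A M)
    · obtain ⟨u, hu, e, he, huz⟩ := Submodule.mem_sup.mp (key m hz)
      obtain ⟨a, ha, hau⟩ :=
        (Submodule.mem_ideal_smul_span_iff_exists_sum (I ^ m) x u).mp hu
      refine ⟨a, e, fun _ => ⟨ha, he, ?_⟩⟩
      have hsum : (a.sum fun i c => c • x i) = ∑ i, a i • x i :=
        Finsupp.sum_fintype _ _ (fun i => zero_smul A (x i))
      rw [← huz, ← hau, hsum]
    · exact ⟨0, 0, fun h => absurd h hz⟩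
  choose C E hCE using rep
  rw [eq_top_iff]
  rintro y -
  set g : ℕ → (Fin k → A) × M :=
    fun m => Nat.rec ((fun _ => (0 : A)), y) (fun m p => (p.1 + C m p.2, E m p.2)) m with hg
  have hgs : ∀ m, g (m + 1) = ((g m).1 + C m (g m).2, E m (g m).2) := fun m => rfl
  have hinv : ∀ m, (g m).2 ∈ (I ^ m • ⊤ : Submodule A M) ∧
      y = (∑ i, (g m).1 i • x i) + (g m).2 := by
    intro m
    induction m with
    | zero =>
      constructor
      · rw [pow_zero, Ideal.one_eq_top, Submodule.top_smul]; exact Submodule.mem_top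
      · simp [hg]
    | succ m ih =>
      obtain ⟨h1, h2, h3⟩ := hCE m (g m).2 ih.1
      rw [hgs m]
      refine ⟨h2, ?_⟩
      calc y = (∑ i, (g m).1 i • x i) + (g m).2 := ih.2
        _ = (∑ i, (g m).1 i • x i) + ((∑ i, C m (g m).2 i • x i) + E m (g m).2) := by
            rw [← h3]
        _ = (∑ i, ((g m).1 + C m (g m).2) i • x i) + E m (g m).2 := by
            rw [← add_assoc, ← Finset.sum_add_distrib]
            simp [add_smul]
  have hdiff : ∀ m i, (g (m + 1)).1 i - (g m).1 i ∈ I ^ m := by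
    intro m i
    rw [hgs m]
    simpa using (hCE m (g m).2 (hinv m).1).1 i
  have htel : ∀ i : Fin k, ∀ {p q : ℕ}, p ≤ q →
      (g p).1 i ≡ (g q).1 i [SMOD (I ^ p • ⊤ : Submodule A A)] := by
    intro i p q hpq
    rw [SModEq.sub_mem, idtop]
    induction q, hpq using Nat.le_induction with
    | base => simp
    | succ q hpq ih =>
      have h4 : (g p).1 i - (g (q + 1)).1 i =
          ((g p).1 i - (g q).1 i) + ((g q).1 i - (g (q + 1)).1 i) := by ring
      rw [h4]
      refine Ideal.add_mem _ ih ?_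
      have h5 : (g q).1 i - (g (q + 1)).1 i ∈ I ^ q := by
        simpa using (I ^ q).neg_mem (hdiff q i)
      exact Ideal.pow_le_pow_right hpq h5
  have hprec : ∀ i, ∃ L, ∀ m, (g m).1 i ≡ L [SMOD (I ^ m • ⊤ : Submodule A A)] := by
    intro i
    exact hA.prec fun {p q} hpq => htel i hpq
  choose L hL using hprec
  have hz : ∀ m, y - ∑ i, L i • x i ∈ (I ^ m • ⊤ : Submodule A M) := by
    intro m
    have hrw : y - ∑ i, L i • x i = (g m).2 + ∑ i, ((g m).1 i - L i) • x i := by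
      rw [(hinv m).2]
      rw [Finset.sum_congr rfl (fun i _ => sub_smul ((g m).1 i) (L i) (x i)),
        Finset.sum_sub_distrib]
      abel
    rw [hrw]
    refine Submodule.add_mem _ (hinv m).1 (Submodule.sum_mem _ fun i _ => ?_)
    have hmem : (g m).1 i - L i ∈ I ^ m := by
      have h6 := hL i m
      rw [SModEq.sub_mem, idtop] at h6
      exact h6
    exact Submodule.smul_mem_smul hmem Submodule.mem_top
  have h0 := hhaus _ hz
  have hy : y = ∑ i, L i • x i := sub_eq_zero.mp h0
  rw [hy]
  exact Submodule.sum_mem _ fun i _ =>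
    Submodule.smul_mem _ _ (Submodule.subset_span (Set.mem_range_self i))

end Nakayama

/-- A local homomorphism `f : A → B` between Noetherian local rings is module-finite provided
some power of the maximal ideal of `B` lands in the extension of the maximal ideal of `A`,
`f` is surjective onto `B` modulo its maximal ideal, `A` is precomplete and `B` separated. -/
theorem finite_of_complete {A B : Type*} [CommRing A] [CommRing B] [IsNoetherianRing B]
    [IsLocalRing A] [IsLocalRing B] (f : A →+* B) [IsLocalHom f] {n : ℕ}
    (hpow : maximalIdeal B ^ n ≤ Ideal.map f (maximalIdeal A))
    (hres : ∀ b : B, ∃ a : A, b - f a ∈ maximalIdeal B)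
    (hA : IsPrecomplete (maximalIdeal A) A)
    (hB : IsHausdorff (maximalIdeal B) B) :
    f.Finite := by
  letI : Algebra A B := f.toAlgebra
  have halg : algebraMap A B = f := rfl
  set I := maximalIdeal A with hI
  set J := Ideal.map f I with hJ
  have hmapJ : J ≤ maximalIdeal B := by
    rw [hJ, Ideal.map_le_iff_le_comap]
    intro a ha hu
    exact ha (IsLocalHom.map_nonunit a hu)
  have hsm : (I • ⊤ : Submodule A B) = J.restrictScalars A := by
    rw [Ideal.smul_top_eq_map, halg]
  have step1 : ∀ i : ℕ, ∃ N : Submodule A B, N.FG ∧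
      ((maximalIdeal B ^ (n - i) : Ideal B)).restrictScalars A ≤ N ⊔ J.restrictScalars A := by
    intro i
    induction i with
    | zero =>
      refine ⟨⊥, Submodule.fg_bot, ?_⟩
      intro z hz
      exact Submodule.mem_sup_right (hpow (by simpa using hz))
    | succ i ih =>
      obtain ⟨N, hNfg, hNle⟩ := ih
      set e := n - (i + 1) with he
      obtain ⟨m, y, hy⟩ := Submodule.fg_iff_exists_fin_generating_family.mp
        (IsNoetherian.noetherian (maximalIdeal B ^ e : Ideal B))
      refine ⟨N ⊔ Submodule.span A (Set.range y),
        hNfg.sup (Submodule.fg_span (Set.finite_range y)), ?_⟩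
      intro z hz
      have hz' : z ∈ Submodule.span B (Set.range y) := by rw [hy]; exact hz
      obtain ⟨c, hc⟩ := mem_span_range_iff_exists_fun B |>.mp hz'
      have key : ∀ j, ∃ a : A, c j - f a ∈ maximalIdeal B := fun j => hres (c j)
      choose a ha using key
      have hz2 : z = (∑ j, a j • y j) + ∑ j, (c j - f (a j)) * y j := by
        rw [← hc, ← Finset.sum_add_distrib]
        refine Finset.sum_congr rfl fun j _ => ?_
        have hsm' : a j • y j = f (a j) * y j := by rw [Algebra.smul_def, halg]
        rw [hsm']
        rw [smul_eq_mul]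
        ring
      have hmem2 : (∑ j, (c j - f (a j)) * y j) ∈ (maximalIdeal B ^ (n - i) : Ideal B) := by
        have hle : (maximalIdeal B : Ideal B) ^ (e + 1) ≤ maximalIdeal B ^ (n - i) :=
          Ideal.pow_le_pow_right (by omega)
        refine hle (Submodule.sum_mem _ fun j _ => ?_)
        have hyj : y j ∈ (maximalIdeal B ^ e : Ideal B) := by
          rw [← hy]; exact Submodule.subset_span (Set.mem_range_self j)
        have h7 := Ideal.mul_mem_mul (ha j) hyj
        rw [← pow_succ'] at h7
        exact h7
      have hmem2' : (∑ j, (c j - f (a j)) * y j) ∈ N ⊔ J.restrictScalars A := hNle hmem2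
      rw [hz2]
      have h1 : (∑ j, a j • y j) ∈ Submodule.span A (Set.range y) :=
        Submodule.sum_mem _ fun j _ =>
          Submodule.smul_mem _ _ (Submodule.subset_span (Set.mem_range_self j))
      obtain ⟨u, hu, v, hv, huv⟩ := Submodule.mem_sup.mp hmem2'
      rw [← huv, ← add_assoc]
      exact Submodule.add_mem _
        (Submodule.mem_sup_left (Submodule.add_mem _ (Submodule.mem_sup_right h1)
          (Submodule.mem_sup_left hu)))
        (Submodule.mem_sup_right hv)
  obtain ⟨N, hNfg, hNle⟩ := step1 n
  have hNtop : N ⊔ (I • ⊤ : Submodule A B) = ⊤ := by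
    rw [hsm, eq_top_iff]
    intro z _
    exact hNle (by simp)
  obtain ⟨k, x, hx⟩ := Submodule.fg_iff_exists_fin_generating_family.mp hNfg
  have hhaus : ∀ z : B, (∀ m : ℕ, z ∈ ((I ^ m : Ideal A) • ⊤ : Submodule A B)) → z = 0 := by
    intro z hzm
    refine hB.haus z fun m => ?_
    rw [SModEq.zero, smul_eq_mul, Ideal.mul_top]
    have h1 : ((I ^ m : Ideal A) • ⊤ : Submodule A B) =
        (Ideal.map f (I ^ m)).restrictScalars A := by
      rw [Ideal.smul_top_eq_map, halg]
    have h2 := hzm m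
    rw [h1] at h2
    have h3 : Ideal.map f (I ^ m) ≤ maximalIdeal B ^ m := by
      rw [Ideal.map_pow]
      exact Ideal.pow_right_mono hmapJ m
    exact h3 h2
  have hspan : Submodule.span A (Set.range x) = ⊤ :=
    nakayama_complete I hA hhaus x (by rw [hx]; exact hNtop)
  exact Module.Finite.of_fg_top (by rw [← hspan]; exact ⟨(Set.finite_range x).toFinset, by simp⟩)

/-- Let `φ : (R,m,k) → (R,m,k)` be a contracting endomorphism with
`R/φ(m)R` Artinian, `β̃ : R → (S,mS,K)` a local homomorphism whose target has maximal ideal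
`mS`, and `ψ : S → S` a local endomorphism with `ψ ∘ β̃ = β̃ ∘ φ` inducing an isomorphism on
the residue field `K`, with `S` complete. Then `ψ` is module-finite. -/
theorem psi_module_finite
    {R S : Type u} [CommRing R] [CommRing S] [IsNoetherianRing R] [IsNoetherianRing S]
    [IsLocalRing R] [IsLocalRing S]
    (φ : R →+* R) (β : R →+* S) (ψ : S →+* S)
    [IsLocalHom φ] [IsLocalHom β] [IsLocalHom ψ]
    (hcontr : ∃ N : ℕ, ∀ n : ℕ, N ≤ n → ∀ x ∈ maximalIdeal R,
      (φ ^ n) x ∈ (maximalIdeal R) ^ 2)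
    (hart : IsArtinianRing (R ⧸ Ideal.map φ (maximalIdeal R)))
    (hmax : maximalIdeal S = Ideal.map β (maximalIdeal R))
    (hcomm : ψ.comp β = β.comp φ)
    (hres : Function.Bijective (ResidueField.map ψ))
    (hcomplete : IsAdicComplete (maximalIdeal S) S) :
    ψ.Finite := by
  classical
  set Jφ := Ideal.map φ (maximalIdeal R) with hJφ
  have hJφle : Jφ ≤ maximalIdeal R := by
    rw [hJφ, Ideal.map_le_iff_le_comap]
    intro a ha hu
    exact ha (IsLocalHom.map_nonunit a hu)
  have hJφne : Jφ ≠ ⊤ := fun h => (maximalIdeal.isMaximal R).ne_top (top_le_iff.mp (h ▸ hJφle))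
  haveI : Nontrivial (R ⧸ Jφ) := Ideal.Quotient.nontrivial_iff.mpr hJφne
  haveI : IsLocalRing (R ⧸ Jφ) :=
    IsLocalRing.of_surjective' (Ideal.Quotient.mk Jφ) Ideal.Quotient.mk_surjective
  -- some power of the maximal ideal of `R` is contained in `Jφ`
  obtain ⟨c, hc⟩ := IsArtinianRing.isNilpotent_jacobson_bot (R := R ⧸ Jφ)
  have hmk : Ideal.map (Ideal.Quotient.mk Jφ) (maximalIdeal R) ≤ maximalIdeal (R ⧸ Jφ) := by
    rw [Ideal.map_le_iff_le_comap]
    intro a ha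
    rw [Ideal.mem_comap, mem_maximalIdeal, mem_nonunits_iff]
    intro hu
    rw [mem_maximalIdeal, mem_nonunits_iff] at ha
    apply ha
    obtain ⟨b, hb⟩ := Ideal.Quotient.mk_surjective ((hu.unit⁻¹ : Units (R ⧸ Jφ)) : R ⧸ Jφ)
    have h1 : Ideal.Quotient.mk Jφ (a * b - 1) = 0 := by
      rw [map_sub, map_mul, hb, map_one]
      rw [sub_eq_zero]
      calc Ideal.Quotient.mk Jφ a * ((hu.unit⁻¹ : Units (R ⧸ Jφ)) : R ⧸ Jφ)
          = (hu.unit : R ⧸ Jφ) * ((hu.unit⁻¹ : Units (R ⧸ Jφ)) : R ⧸ Jφ) := by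
            rw [IsUnit.unit_spec]
        _ = 1 := by rw [← Units.val_mul, mul_inv_cancel, Units.val_one]
    have h2 : a * b - 1 ∈ maximalIdeal R :=
      hJφle ((Ideal.Quotient.eq_zero_iff_mem).mp h1)
    have h3 : IsUnit (a * b) := by
      have h4 : (1 : R) - (1 - a * b) = a * b := by ring
      have h5 : (1 : R) - a * b ∈ nonunits R := by
        have := (maximalIdeal R).neg_mem h2
        rw [neg_sub] at this
        exact this
      have := isUnit_one_sub_self_of_mem_nonunits _ h5
      rwa [h4] at this
    exact isUnit_of_mul_isUnit_left h3
  have hcpow : maximalIdeal R ^ c ≤ Jφ := by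
    have hjac : (⊥ : Ideal (R ⧸ Jφ)).jacobson = maximalIdeal (R ⧸ Jφ) :=
      IsLocalRing.jacobson_eq_maximalIdeal (⊥ : Ideal (R ⧸ Jφ)) bot_ne_top
    have h5 : Ideal.map (Ideal.Quotient.mk Jφ) (maximalIdeal R ^ c) ≤ ⊥ := by
      rw [Ideal.map_pow]
      refine le_trans (Ideal.pow_right_mono hmk c) ?_
      rw [← hjac]
      exact hc.le
    intro x hx
    have h6 : Ideal.Quotient.mk Jφ x ∈ (⊥ : Ideal (R ⧸ Jφ)) :=
      h5 (Ideal.mem_map_of_mem _ hx)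
    rw [Ideal.mem_bot] at h6
    exact (Ideal.Quotient.eq_zero_iff_mem).mp h6
  -- transfer to `S`
  have hpowS : maximalIdeal S ^ c ≤ Ideal.map ψ (maximalIdeal S) := by
    calc maximalIdeal S ^ c = Ideal.map β (maximalIdeal R) ^ c := by rw [hmax]
      _ = Ideal.map β (maximalIdeal R ^ c) := (Ideal.map_pow _ _ _).symm
      _ ≤ Ideal.map β Jφ := Ideal.map_mono hcpow
      _ = Ideal.map (β.comp φ) (maximalIdeal R) := by rw [hJφ, Ideal.map_map]
      _ = Ideal.map (ψ.comp β) (maximalIdeal R) := by rw [hcomm]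
      _ = Ideal.map ψ (Ideal.map β (maximalIdeal R)) := (Ideal.map_map _ _).symm
      _ = Ideal.map ψ (maximalIdeal S) := by rw [← hmax]
  have hresS : ∀ b : S, ∃ a : S, b - ψ a ∈ maximalIdeal S := by
    intro q
    obtain ⟨abar, habar⟩ := hres.2 (residue S q)
    obtain ⟨a, rfl⟩ := residue_surjective abar
    refine ⟨a, ?_⟩
    have h1 : residue S (ψ a) = residue S q := by
      rw [← ResidueField.map_residue]
      exact habar
    have h2 : ψ a - q ∈ maximalIdeal S := Ideal.Quotient.eq.mp h1
    have h3 := (maximalIdeal S).neg_mem h2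
    rwa [neg_sub] at h3
  exact finite_of_complete ψ hpowS hresS hcomplete.toIsPrecomplete hcomplete.toIsHausdorff
end

section
/- Let φ : (R, m) → (R, m) be a contracting endomorphism of a local ring and C a semidualizing R-complex. If ^nR ∈ B_C(R) for infinitely many n ≥ 1, then C ≃ R (up to shift) in D(R); equivalently pd_R(C) < ∞. -/
open CategoryTheory

/-- The `i`-th Ext module of two `R`-modules. -/
noncomputable def extModule (R : Type u) [CommRing R] (M N : Type u)
    [AddCommGroup M] [AddCommGroup N] [Module R M] [Module R N] (i : ℕ) : ModuleCat R :=
  ((Ext R (ModuleCat.{u} R) i).obj (Opposite.op (ModuleCat.of R M))).obj (ModuleCat.of R N)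

/-- The `i`-th Tor module of two `R`-modules. -/
noncomputable def torModule (R : Type u) [CommRing R] (M N : Type u)
    [AddCommGroup M] [AddCommGroup N] [Module R M] [Module R N] (i : ℕ) : ModuleCat R :=
  ((Tor (ModuleCat.{u} R) i).obj (ModuleCat.of R M)).obj (ModuleCat.of R N)

/-- An `R`-module `C` is *semidualizing* if it is finitely generated, the homothety map
`R → Hom_R(C, C)` is bijective, and `Ext^i_R(C, C) = 0` for all `i ≥ 1`. -/
def IsSemidualizing (R : Type u) [CommRing R] (C : Type u) [AddCommGroup C] [Module R C] :
    Prop :=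
  Module.Finite R C ∧ Function.Bijective (LinearMap.lsmul R C) ∧
    ∀ i : ℕ, 0 < i → Subsingleton (extModule R C C i)

/-- The evaluation map `C ⊗_R Hom_R(C, M) → M`. -/
noncomputable def bassEval (R : Type u) [CommRing R] (C M : Type u)
    [AddCommGroup C] [AddCommGroup M] [Module R C] [Module R M] :
    TensorProduct R C (C →ₗ[R] M) →ₗ[R] M :=
  TensorProduct.lift ((LinearMap.id : (C →ₗ[R] M) →ₗ[R] (C →ₗ[R] M)).flip)

/-- Membership in the Bass class `B_C(R)`: `Ext^{≥1}_R(C, M) = 0`,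
`Tor^R_{≥1}(C, Hom_R(C, M)) = 0`, and the evaluation map `C ⊗_R Hom_R(C,M) → M`
is an isomorphism. -/
def MemBassClass (R : Type u) [CommRing R] (C M : Type u)
    [AddCommGroup C] [AddCommGroup M] [Module R C] [Module R M] : Prop :=
  (∀ i : ℕ, 0 < i → Subsingleton (extModule R C M i)) ∧
    (∀ i : ℕ, 0 < i → Subsingleton (torModule R C (C →ₗ[R] M) i)) ∧
    Function.Bijective (bassEval R C M)


open IsLocalRing

namespace SDZhelp
universe u
set_option linter.unusedSectionVars false

private theorem smul_mk_eq {R : Type u} [CommRing R] (I : Ideal R) (r : R) (y : R ⧸ I) :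
    r • y = Ideal.Quotient.mk I r * y := by
  obtain ⟨z, rfl⟩ := Ideal.Quotient.mk_surjective y
  rw [← map_mul]
  rfl

variable (R : Type u) [CommRing R] [IsLocalRing R] (ψ : R →+* R)

def Rt : Type u := let _ := ψ; R
instance : AddCommGroup (Rt R ψ) := inferInstanceAs (AddCommGroup R)
noncomputable instance : Module R (Rt R ψ) := Module.compHom R ψ
def toR : Rt R ψ → R := fun x => x
def ofR : R → Rt R ψ := fun x => x

def muls (s : R) : Rt R ψ →ₗ[R] Rt R ψ where
  toFun x := ofR R ψ (s * toR R ψ x)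
  map_add' x y := by
    show (s * (toR R ψ x + toR R ψ y) : R) = s * toR R ψ x + s * toR R ψ y
    ring
  map_smul' r x := by
    show (s * (ψ r * toR R ψ x) : R) = ψ r * (s * toR R ψ x)
    ring

variable (C : Type u) [AddCommGroup C] [Module R C]

noncomputable def postm (s : R) : (C →ₗ[R] Rt R ψ) →ₗ[R] (C →ₗ[R] Rt R ψ) where
  toFun f := (muls R ψ s).comp f
  map_add' f g := by
    ext c
    show (s * (toR R ψ (f c) + toR R ψ (g c)) : R) = s * toR R ψ (f c) + s * toR R ψ (g c)
    ring
  map_smul' r f := by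
    ext c
    show (s * (ψ r * toR R ψ (f c)) : R) = ψ r * (s * toR R ψ (f c))
    ring

theorem postm_apply (s : R) (f : C →ₗ[R] Rt R ψ) (c : C) :
    toR R ψ (postm R ψ C s f c) = s * toR R ψ (f c) := rfl

def Kr : Type u := let _ := ψ; R ⧸ maximalIdeal R
noncomputable def rho : R →+* R ⧸ maximalIdeal R := (Ideal.Quotient.mk (maximalIdeal R)).comp ψ
instance : AddCommGroup (Kr R ψ) := inferInstanceAs (AddCommGroup (R ⧸ maximalIdeal R))
noncomputable instance : Module R (Kr R ψ) := Module.compHom (R ⧸ maximalIdeal R) (rho R ψ)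
noncomputable instance : Module (R ⧸ maximalIdeal R) (Kr R ψ) :=
  inferInstanceAs (Module (R ⧸ maximalIdeal R) (R ⧸ maximalIdeal R))
def toK : Kr R ψ → R ⧸ maximalIdeal R := fun x => x
def ofK : R ⧸ maximalIdeal R → Kr R ψ := fun x => x

instance : SMulCommClass R (R ⧸ maximalIdeal R) (Kr R ψ) :=
  ⟨fun r a x => by
    show (rho R ψ r * (a * toK R ψ x) : R ⧸ maximalIdeal R) = a * (rho R ψ r * toK R ψ x)
    ring⟩

noncomputable def resK : Rt R ψ →ₗ[R] Kr R ψ where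
  toFun x := ofK R ψ (Ideal.Quotient.mk (maximalIdeal R) (toR R ψ x))
  map_add' x y := by
    show (Ideal.Quotient.mk (maximalIdeal R) (toR R ψ x + toR R ψ y) : R ⧸ maximalIdeal R)
        = Ideal.Quotient.mk (maximalIdeal R) (toR R ψ x) + Ideal.Quotient.mk (maximalIdeal R) (toR R ψ y)
    rw [map_add]
  map_smul' r x := by
    show (Ideal.Quotient.mk (maximalIdeal R) (ψ r * toR R ψ x) : R ⧸ maximalIdeal R)
        = rho R ψ r * Ideal.Quotient.mk (maximalIdeal R) (toR R ψ x)
    rw [map_mul]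
    rfl

theorem resK_comp_postm (s : R) (f : C →ₗ[R] Rt R ψ) :
    (resK R ψ).comp (postm R ψ C s f) =
      Ideal.Quotient.mk (maximalIdeal R) s • (resK R ψ).comp f := by
  apply LinearMap.ext; intro c
  show (Ideal.Quotient.mk (maximalIdeal R) (s * toR R ψ (f c)) : R ⧸ maximalIdeal R)
      = Ideal.Quotient.mk (maximalIdeal R) s * Ideal.Quotient.mk (maximalIdeal R) (toR R ψ (f c))
  rw [map_mul]

theorem resK_comp_smul (r : R) (f : C →ₗ[R] Rt R ψ) :
    (resK R ψ).comp (r • f) = rho R ψ r • (resK R ψ).comp f := by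
  apply LinearMap.ext; intro c
  show (Ideal.Quotient.mk (maximalIdeal R) (ψ r * toR R ψ (f c)) : R ⧸ maximalIdeal R)
      = rho R ψ r * Ideal.Quotient.mk (maximalIdeal R) (toR R ψ (f c))
  rw [map_mul]
  rfl

noncomputable def psib (hψ : ∀ r ∈ maximalIdeal R, ψ r ∈ maximalIdeal R) :
    R ⧸ maximalIdeal R →+* R ⧸ maximalIdeal R :=
  Ideal.Quotient.lift (maximalIdeal R) (rho R ψ)
    (fun r hr => Ideal.Quotient.eq_zero_iff_mem.2 (hψ r hr))

noncomputable def Dmap (hψ : ∀ r ∈ maximalIdeal R, ψ r ∈ maximalIdeal R)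
    (γ : C →ₗ[R] R ⧸ maximalIdeal R)
    (L : (C →ₗ[R] Kr R ψ) →ₗ[R ⧸ maximalIdeal R] (R ⧸ maximalIdeal R)) :
    TensorProduct R C (C →ₗ[R] Rt R ψ) →ₗ[R] Kr R ψ :=
  TensorProduct.lift
  { toFun := fun c =>
    { toFun := fun f => ofK R ψ (psib R ψ hψ (γ c) * L ((resK R ψ).comp f))
      map_add' := fun f g => by
        show (psib R ψ hψ (γ c) * L ((resK R ψ).comp (f + g)) : R ⧸ maximalIdeal R)
            = psib R ψ hψ (γ c) * L ((resK R ψ).comp f)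
              + psib R ψ hψ (γ c) * L ((resK R ψ).comp g)
        rw [LinearMap.comp_add, map_add, mul_add]
      map_smul' := fun r f => by
        show (psib R ψ hψ (γ c) * L ((resK R ψ).comp (r • f)) : R ⧸ maximalIdeal R)
            = rho R ψ r * (psib R ψ hψ (γ c) * L ((resK R ψ).comp f))
        rw [resK_comp_smul, map_smul, smul_eq_mul]
        ring }
    map_add' := fun c c' => by
      apply LinearMap.ext; intro f
      show (psib R ψ hψ (γ (c + c')) * L ((resK R ψ).comp f) : R ⧸ maximalIdeal R)
          = psib R ψ hψ (γ c) * L ((resK R ψ).comp f)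
            + psib R ψ hψ (γ c') * L ((resK R ψ).comp f)
      rw [map_add, map_add, add_mul]
    map_smul' := fun r c => by
      apply LinearMap.ext; intro f
      show (psib R ψ hψ (γ (r • c)) * L ((resK R ψ).comp f) : R ⧸ maximalIdeal R)
          = rho R ψ r * (psib R ψ hψ (γ c) * L ((resK R ψ).comp f))
      rw [map_smul, smul_mk_eq, map_mul]
      have hpm : psib R ψ hψ (Ideal.Quotient.mk (maximalIdeal R) r) = rho R ψ r :=
        Ideal.Quotient.lift_mk _ _ _
      rw [hpm, mul_assoc] }

theorem Dmap_tmul (hψ : ∀ r ∈ maximalIdeal R, ψ r ∈ maximalIdeal R)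
    (γ : C →ₗ[R] R ⧸ maximalIdeal R)
    (L : (C →ₗ[R] Kr R ψ) →ₗ[R ⧸ maximalIdeal R] (R ⧸ maximalIdeal R))
    (c : C) (f : C →ₗ[R] Rt R ψ) :
    Dmap R ψ C hψ γ L (c ⊗ₜ[R] f) = ofK R ψ (psib R ψ hψ (γ c) * L ((resK R ψ).comp f)) := by
  unfold Dmap
  rw [TensorProduct.lift.tmul]
  rfl


/-- Every nonzero vector in a vector space admits a functional sending it to 1. -/
theorem exists_functional {K V : Type u} [Field K] [AddCommGroup V] [Module K V]
    {x : V} (hx : x ≠ 0) : ∃ g : V →ₗ[K] K, g x = 1 := by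
  have h : ¬ ∀ φ : Module.Dual K V, φ x = 0 := by
    rw [Module.forall_dual_apply_eq_zero_iff]; exact hx
  push_neg at h
  obtain ⟨φ, hφ⟩ := h
  refine ⟨(φ x)⁻¹ • φ, ?_⟩
  rw [LinearMap.smul_apply, smul_eq_mul, inv_mul_cancel₀ hφ]

/-- An `R`-linear functional to the residue field hitting `1`,
for modules killed by the maximal ideal. -/
theorem exists_functional_R {R : Type u} [CommRing R] [IsLocalRing R] {M : Type u}
    [AddCommGroup M] [Module R M]
    (htor : ∀ r ∈ maximalIdeal R, ∀ x : M, r • x = 0) {x : M} (hx : x ≠ 0) :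
    ∃ α : M →ₗ[R] R ⧸ maximalIdeal R, α x = 1 := by
  have htor' : Module.IsTorsionBySet R M (maximalIdeal R) := fun x a => htor a.1 a.2 x
  letI : Module (R ⧸ maximalIdeal R) M := htor'.module
  letI : Field (R ⧸ maximalIdeal R) := Ideal.Quotient.field _
  obtain ⟨g, hg⟩ := exists_functional (K := R ⧸ maximalIdeal R) hx
  refine ⟨{ toFun := g, map_add' := g.map_add, map_smul' := ?_ }, hg⟩
  intro r m
  have h1 : g (r • m) = Ideal.Quotient.mk (maximalIdeal R) r • g m :=
    g.map_smul (Ideal.Quotient.mk (maximalIdeal R) r) m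
  rw [smul_eq_mul] at h1
  show g (r • m) = r • g m
  rw [h1, smul_mk_eq]

theorem key (R : Type u) [CommRing R] [IsLocalRing R] (ψ : R →+* R)
    (hψ : ∀ r ∈ maximalIdeal R, ψ r ∈ maximalIdeal R)
    (C : Type u) [AddCommGroup C] [Module R C]
    (hfin : Module.Finite R C) (hinjl : Function.Injective (LinearMap.lsmul R C))
    (hbij : Function.Bijective (bassEval R C (Rt R ψ))) :
    Nonempty (C ≃ₗ[R] R) := by
  classical
  set E := bassEval R C (Rt R ψ) with hEdef
  have hE : ∀ (c : C) (f : C →ₗ[R] Rt R ψ), E (c ⊗ₜ[R] f) = f c := by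
    intro c f
    show TensorProduct.lift ((LinearMap.id : (C →ₗ[R] Rt R ψ) →ₗ[R] _).flip) (c ⊗ₜ[R] f) = f c
    rw [TensorProduct.lift.tmul]
    rfl
  obtain ⟨t₀, ht₀⟩ := hbij.2 (ofR R ψ 1)
  set W : Submodule R (TensorProduct R C (C →ₗ[R] Rt R ψ)) :=
    Submodule.span R {t | ∃ s ∈ maximalIdeal R, ∃ (c : C) (f : C →ₗ[R] Rt R ψ),
      t = c ⊗ₜ[R] postm R ψ C s f} with hWdef
  -- E maps W into the maximal ideal
  have hWm : ∀ t ∈ W, toR R ψ (E t) ∈ maximalIdeal R := by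
    intro t ht
    induction ht using Submodule.span_induction with
    | mem y h =>
      obtain ⟨s, hs, c, f, rfl⟩ := h
      rw [hE]
      exact Ideal.mul_mem_right _ _ hs
    | zero =>
      rw [map_zero]
      exact zero_mem _
    | add y z hy hz ihy ihz =>
      rw [map_add]
      exact add_mem ihy ihz
    | smul a y hy ih =>
      rw [map_smul]
      exact Ideal.mul_mem_left _ _ ih
  -- E intertwines the auxiliary action
  have hPsiE : ∀ (s : R) (t : TensorProduct R C (C →ₗ[R] Rt R ψ)),
      E (LinearMap.lTensor C (postm R ψ C s) t) = muls R ψ s (E t) := by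
    intro s t
    have hcomp : E.comp (LinearMap.lTensor C (postm R ψ C s)) = (muls R ψ s).comp E := by
      apply TensorProduct.ext'
      intro c f
      rw [LinearMap.comp_apply, LinearMap.lTensor_tmul, hE, LinearMap.comp_apply, hE]
      rfl
    exact congrArg (fun (g : _ →ₗ[R] _) => g t) hcomp
  have hW1 : ∀ s ∈ maximalIdeal R, ∀ t, LinearMap.lTensor C (postm R ψ C s) t ∈ W := by
    intro s hs t
    have ht : t ∈ Submodule.span R
        {x : TensorProduct R C (C →ₗ[R] Rt R ψ) | ∃ c f, c ⊗ₜ[R] f = x} := by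
      rw [TensorProduct.span_tmul_eq_top]; trivial
    induction ht using Submodule.span_induction with
    | mem y h =>
      obtain ⟨c, f, rfl⟩ := h
      rw [LinearMap.lTensor_tmul]
      exact Submodule.subset_span ⟨s, hs, c, f, rfl⟩
    | zero =>
      rw [map_zero]; exact zero_mem _
    | add y z hy hz ihy ihz =>
      rw [map_add]; exact add_mem ihy ihz
    | smul a y hy ih =>
      rw [map_smul]; exact Submodule.smul_mem _ _ ih
  have hW3 : ∀ t, toR R ψ (E t) ∈ maximalIdeal R → t ∈ W := by
    intro t ht
    have h1 : E (LinearMap.lTensor C (postm R ψ C (toR R ψ (E t))) t₀) = E t := by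
      rw [hPsiE, ht₀]
      show ofR R ψ (toR R ψ (E t) * 1) = E t
      rw [mul_one]
      rfl
    have h2 := hbij.1 h1
    rw [← h2]
    exact hW1 _ ht t₀
  -- C is nonzero mod m
  have hc₀ : ∃ c₀ : C, c₀ ∉ (maximalIdeal R • ⊤ : Submodule R C) := by
    by_contra h
    push_neg at h
    have htop : (⊤ : Submodule R C) ≤ (maximalIdeal R • ⊤ : Submodule R C) := fun c _ => h c
    have hbot := Submodule.eq_bot_of_le_smul_of_le_jacobson_bot (maximalIdeal R) ⊤
      (Module.finite_def.mp hfin) htop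
      (le_of_eq (IsLocalRing.jacobson_eq_maximalIdeal ⊥ bot_ne_top).symm)
    have hzero : ∀ c : C, c = 0 := by
      intro c
      have hm : c ∈ (⊤ : Submodule R C) := trivial
      rw [hbot] at hm
      simpa using hm
    have hE0 : ∀ t, E t = 0 := by
      intro t
      have ht : t ∈ Submodule.span R
          {x : TensorProduct R C (C →ₗ[R] Rt R ψ) | ∃ c f, c ⊗ₜ[R] f = x} := by
        rw [TensorProduct.span_tmul_eq_top]; trivial
      induction ht using Submodule.span_induction with
      | mem y h =>
        obtain ⟨c, f, rfl⟩ := h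
        rw [hE, hzero c, map_zero]
      | zero => rw [map_zero]
      | add y z hy hz ihy ihz => rw [map_add, ihy, ihz, add_zero]
      | smul a y hy ih => rw [map_smul, ih, smul_zero]
    exact (one_ne_zero : (1 : R) ≠ 0) (congrArg (toR R ψ) (ht₀.symm.trans (hE0 t₀)))
  obtain ⟨c₀, hc₀⟩ := hc₀
  -- a homomorphism f₀ : C → Rt not mapping into m
  have hf₀ : ∃ f₀ : C →ₗ[R] Rt R ψ, (resK R ψ).comp f₀ ≠ 0 := by
    by_contra h
    push_neg at h
    have hm : ∀ (f : C →ₗ[R] Rt R ψ) (c : C), toR R ψ (f c) ∈ maximalIdeal R := by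
      intro f c
      have hv : resK R ψ (f c) = 0 := by
        rw [← LinearMap.comp_apply, h f]
        rfl
      exact Ideal.Quotient.eq_zero_iff_mem.1 (congrArg (toK R ψ) hv)
    have h1m : (1 : R) ∈ maximalIdeal R := by
      have hEm : ∀ t, toR R ψ (E t) ∈ maximalIdeal R := by
        intro t
        have ht : t ∈ Submodule.span R
            {x : TensorProduct R C (C →ₗ[R] Rt R ψ) | ∃ c f, c ⊗ₜ[R] f = x} := by
          rw [TensorProduct.span_tmul_eq_top]; trivial
        induction ht using Submodule.span_induction with
        | mem y hy =>
          obtain ⟨c, f, rfl⟩ := hy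
          rw [hE]
          exact hm f c
        | zero => rw [map_zero]; exact zero_mem _
        | add y z hy hz ihy ihz => rw [map_add]; exact add_mem ihy ihz
        | smul a y hy ih => rw [map_smul]; exact Ideal.mul_mem_left _ _ ih
      have := hEm t₀
      rw [ht₀] at this
      exact this
    exact (Ideal.ne_top_iff_one _).1
      (Ideal.IsMaximal.ne_top (IsLocalRing.maximalIdeal.isMaximal R)) h1m
  obtain ⟨f₀, hf₀⟩ := hf₀
  letI : Field (R ⧸ maximalIdeal R) := Ideal.Quotient.field _
  obtain ⟨L, hL⟩ := exists_functional (K := R ⧸ maximalIdeal R) hf₀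
  -- torsion helper
  have htorP : ∀ P : Submodule R C, (maximalIdeal R • ⊤ : Submodule R C) ≤ P →
      ∀ r ∈ maximalIdeal R, ∀ q : C ⧸ P, r • q = 0 := by
    intro P hP r hr q
    obtain ⟨c, rfl⟩ := Submodule.Quotient.mk_surjective P q
    rw [← Submodule.Quotient.mk_smul, Submodule.Quotient.mk_eq_zero]
    exact hP (Submodule.smul_mem_smul hr trivial)
  -- main claim : C = R c₀ + m C
  have main : ∀ x : C, x ∈ (Submodule.span R {c₀} ⊔ (maximalIdeal R • ⊤) : Submodule R C) := by
    intro x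
    by_contra hx
    have hc₀P' : c₀ ∉ (Submodule.span R {x} ⊔ (maximalIdeal R • ⊤) : Submodule R C) := by
      intro hc
      obtain ⟨y, hy, z, hz, hyz⟩ := Submodule.mem_sup.1 hc
      obtain ⟨r, rfl⟩ := Submodule.mem_span_singleton.1 hy
      by_cases hr : r ∈ maximalIdeal R
      · refine hc₀ ?_
        rw [← hyz]
        exact Submodule.add_mem _ (Submodule.smul_mem_smul hr trivial) hz
      · have hu : IsUnit r := by
          by_contra hnu
          exact hr ((IsLocalRing.mem_maximalIdeal r).2 (mem_nonunits_iff.2 hnu))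
        obtain ⟨u, rfl⟩ := hu
        refine hx ?_
        have hxeq : x = (↑u⁻¹ : R) • (c₀ - z) := by
          rw [← hyz]
          simp [smul_smul]
        rw [hxeq]
        refine Submodule.smul_mem _ _ (Submodule.sub_mem _ ?_ ?_)
        · exact le_sup_left (α := Submodule R C) (Submodule.mem_span_singleton_self c₀)
        · exact le_sup_right (α := Submodule R C) hz
    -- functionals α (x ↦ 1, c₀ ↦ 0) and β (x ↦ 0, c₀ ↦ 1)
    set P : Submodule R C := Submodule.span R {c₀} ⊔ (maximalIdeal R • ⊤) with hPdef
    set P' : Submodule R C := Submodule.span R {x} ⊔ (maximalIdeal R • ⊤) with hP'def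
    have hxP : P.mkQ x ≠ 0 := by
      rw [Submodule.mkQ_apply, ne_eq, Submodule.Quotient.mk_eq_zero]
      exact hx
    have hc₀P : P'.mkQ c₀ ≠ 0 := by
      rw [Submodule.mkQ_apply, ne_eq, Submodule.Quotient.mk_eq_zero]
      exact hc₀P'
    obtain ⟨α₀, hα₀⟩ := exists_functional_R (htorP P le_sup_right) hxP
    obtain ⟨β₀, hβ₀⟩ := exists_functional_R (htorP P' le_sup_right) hc₀P
    set α := α₀.comp P.mkQ with hαdef
    set β := β₀.comp P'.mkQ with hβdef
    have hαx : α x = 1 := hα₀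
    have hβc₀ : β c₀ = 1 := hβ₀
    have hαc₀ : α c₀ = 0 := by
      have h0 : P.mkQ c₀ = 0 := by
        rw [Submodule.mkQ_apply, Submodule.Quotient.mk_eq_zero]
        exact le_sup_left (α := Submodule R C) (Submodule.mem_span_singleton_self c₀)
      show α₀ (P.mkQ c₀) = 0
      rw [h0, map_zero]
    have hβx : β x = 0 := by
      have h0 : P'.mkQ x = 0 := by
        rw [Submodule.mkQ_apply, Submodule.Quotient.mk_eq_zero]
        exact le_sup_left (α := Submodule R C) (Submodule.mem_span_singleton_self x)
      show β₀ (P'.mkQ x) = 0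
      rw [h0, map_zero]
    set s₁ := toR R ψ (f₀ x) with hs₁def
    set s₂ := toR R ψ (f₀ c₀) with hs₂def
    -- the master computation
    have hgen : ∀ (γ : C →ₗ[R] R ⧸ maximalIdeal R) (a b : R),
        a * s₁ + b * s₂ ∈ maximalIdeal R →
        psib R ψ hψ (γ x) * Ideal.Quotient.mk (maximalIdeal R) a
          + psib R ψ hψ (γ c₀) * Ideal.Quotient.mk (maximalIdeal R) b = 0 := by
      intro γ a b hab
      have hEw : toR R ψ (E (x ⊗ₜ[R] postm R ψ C a f₀ + c₀ ⊗ₜ[R] postm R ψ C b f₀))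
          = a * s₁ + b * s₂ := by
        rw [map_add, hE, hE]
        rfl
      have hwW : (x ⊗ₜ[R] postm R ψ C a f₀ + c₀ ⊗ₜ[R] postm R ψ C b f₀) ∈ W :=
        hW3 _ (by rw [hEw]; exact hab)
      have hD0 : ∀ t ∈ W, Dmap R ψ C hψ γ L t = 0 := by
        intro t ht
        induction ht using Submodule.span_induction with
        | mem y h =>
          obtain ⟨s, hs, c, f, rfl⟩ := h
          rw [Dmap_tmul, resK_comp_postm, map_smul, smul_eq_mul,
            Ideal.Quotient.eq_zero_iff_mem.2 hs, zero_mul, mul_zero]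
          rfl
        | zero => rw [map_zero]
        | add y z hy hz ihy ihz => rw [map_add, ihy, ihz, add_zero]
        | smul a' y hy ih => rw [map_smul, ih, smul_zero]
      have e1 : L ((resK R ψ).comp (postm R ψ C a f₀)) = Ideal.Quotient.mk (maximalIdeal R) a := by
        rw [resK_comp_postm, map_smul, smul_eq_mul, hL, mul_one]
      have e2 : L ((resK R ψ).comp (postm R ψ C b f₀)) = Ideal.Quotient.mk (maximalIdeal R) b := by
        rw [resK_comp_postm, map_smul, smul_eq_mul, hL, mul_one]
      have hDw := hD0 _ hwW
      rw [map_add, Dmap_tmul, Dmap_tmul, e1, e2] at hDw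
      exact hDw
    have hmm1 : s₂ ∈ maximalIdeal R := by
      have h := hgen α s₂ (-s₁) (by
        have hz : s₂ * s₁ + (-s₁) * s₂ = 0 := by ring
        rw [hz]; exact zero_mem _)
      rw [hαx, hαc₀, map_one, map_zero, one_mul, zero_mul, add_zero] at h
      exact Ideal.Quotient.eq_zero_iff_mem.1 h
    have hmm2 : (1 : R) ∈ maximalIdeal R := by
      have h := hgen β 0 1 (by
        have hz : (0 : R) * s₁ + 1 * s₂ = s₂ := by ring
        rw [hz]; exact hmm1)
      rw [hβx, hβc₀, map_one, map_zero, one_mul, zero_mul, zero_add] at h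
      exact Ideal.Quotient.eq_zero_iff_mem.1 h
    exact (Ideal.ne_top_iff_one _).1
      (Ideal.IsMaximal.ne_top (IsLocalRing.maximalIdeal.isMaximal R)) hmm2
  -- Nakayama
  have hspan : (⊤ : Submodule R C) ≤ Submodule.span R {c₀} := by
    refine Submodule.le_of_le_smul_of_le_jacobson_bot (Module.finite_def.mp hfin)
      (le_of_eq (IsLocalRing.jacobson_eq_maximalIdeal ⊥ bot_ne_top).symm) ?_
    intro x _
    exact main x
  -- the isomorphism
  have hsur : Function.Surjective (LinearMap.toSpanSingleton R C c₀) := by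
    intro c
    have hc : c ∈ Submodule.span R {c₀} := hspan trivial
    rw [Submodule.mem_span_singleton] at hc
    obtain ⟨r, hr⟩ := hc
    exact ⟨r, hr⟩
  have hinj' : Function.Injective (LinearMap.toSpanSingleton R C c₀) := by
    rw [injective_iff_map_eq_zero]
    intro r hr
    have hrc : r • c₀ = 0 := by
      rw [← LinearMap.toSpanSingleton_apply]
      exact hr
    have h0 : LinearMap.lsmul R C r = LinearMap.lsmul R C 0 := by
      apply LinearMap.ext
      intro y
      obtain ⟨t, rfl⟩ := hsur y
      show r • (t • c₀) = (0 : R) • (t • c₀)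
      rw [zero_smul, smul_comm, hrc, smul_zero]
    exact hinjl h0
  exact ⟨(LinearEquiv.ofBijective _ ⟨hinj', hsur⟩).symm⟩


end SDZhelp


/-- Let `φ` be a contracting endomorphism of a Noetherian local ring
`(R,m)` and `C` a semidualizing `R`-module.  If `^nR ∈ B_C(R)` for infinitely many `n ≥ 1`,
then `C ≃ R`. -/
theorem semidualizing_trivial_of_bassClass_infinitely_many
    {R : Type u} [CommRing R] [IsNoetherianRing R] [IsLocalRing R]
    (φ : R →+* R) [IsLocalHom φ]
    (hcontr : ∃ N : ℕ, ∀ n : ℕ, N ≤ n → ∀ x ∈ maximalIdeal R,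
      (φ ^ n) x ∈ (maximalIdeal R) ^ 2)
    (C : Type u) [AddCommGroup C] [Module R C] (hC : IsSemidualizing R C)
    (hbass : {n : ℕ | 1 ≤ n ∧
      (letI : Module R R := Module.compHom R (φ ^ n); MemBassClass R C R)}.Infinite) :
    Nonempty (C ≃ₗ[R] R) := by
  classical
  obtain ⟨n, hn⟩ := hbass.nonempty
  have hmb := hn.2
  have hφm : ∀ r ∈ maximalIdeal R, φ r ∈ maximalIdeal R := by
    intro r hr
    by_contra h
    have hu : IsUnit (φ r) := by
      by_contra hnu
      exact h ((IsLocalRing.mem_maximalIdeal (φ r)).2 (mem_nonunits_iff.2 hnu))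
    have hur : IsUnit r := (‹IsLocalHom φ›).map_nonunit r hu
    exact mem_nonunits_iff.1 ((IsLocalRing.mem_maximalIdeal r).1 hr) hur
  have hψm : ∀ m : ℕ, ∀ r ∈ maximalIdeal R, (φ ^ m) r ∈ maximalIdeal R := by
    intro m
    induction m with
    | zero =>
      intro r hr
      simpa using hr
    | succ k ih =>
      intro r hr
      rw [pow_succ]
      have hmul : (φ ^ k * φ) r = (φ ^ k) (φ r) := rfl
      rw [hmul]
      exact ih _ (hφm r hr)
  have hb : Function.Bijective (bassEval R C (SDZhelp.Rt R (φ ^ n))) := hmb.2.2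
  exact SDZhelp.key R (φ ^ n) (hψm n) C hC.1 hC.2.1.1 hb
end
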